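/- The Split Cycle voting method is Condorcet consistent: for any profile P, if there is a Condorcet winner x in P (i.e., Margin_P(x,y) > 0 for every candidate y ≠ x), then SplitCycle(P) = {x}. -/

import Mathlib

open scoped Classical

/-- `r` is a strict linear order on the finite set `X`, relating only members of `X`. -/
def IsLinOn (X : Finset ℕ) (r : ℕ → ℕ → Prop) : Prop :=
  (∀ a b, r a b → a ∈ X ∧ b ∈ X) ∧
  (∀ a, ¬ r a a) ∧
  (∀ a b c, r a b → r b c → r a c) ∧
  (∀ a ∈ X, ∀ b ∈ X, a ≠ b → r a b ∨ r b a)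

/-- A profile assigns to each voter in a nonempty finite set of voters a strict linear
order (ballot) on a nonempty finite set of candidates.  Voters and candidates are both
drawn from the infinite set `ℕ`. -/
structure Profile where
  voters : Finset ℕ
  cands : Finset ℕ
  voters_nonempty : voters.Nonempty
  cands_nonempty : cands.Nonempty
  ballot : ℕ → ℕ → ℕ → Prop
  ballot_lin : ∀ i ∈ voters, IsLinOn cands (ballot i)

/-- `F` is a voting method: it assigns to each profile a nonempty set of winners
among the candidates of the profile. -/
def VotingMethod (F : Profile → Finset ℕ) : Prop :=
  ∀ P : Profile, (F P).Nonempty ∧ F P ⊆ P.cands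

/-- The ballot `r` ranks `x` in first place among the candidates in `X`. -/
def RanksFirst (X : Finset ℕ) (r : ℕ → ℕ → Prop) (x : ℕ) : Prop :=
  x ∈ X ∧ ∀ y ∈ X, y ≠ x → r x y

/-- `P'` is obtained from `P` by adding one new voter `j` whose ballot ranks `x` in
first place. -/
def AddVoter (P P' : Profile) (j x : ℕ) : Prop :=
  P'.cands = P.cands ∧ j ∉ P.voters ∧ P'.voters = insert j P.voters ∧
  (∀ i ∈ P.voters, ∀ a b, (P'.ballot i a b ↔ P.ballot i a b)) ∧
  RanksFirst P.cands (P'.ballot j) x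

/-- `F` satisfies positive involvement (PI). -/
def SatisfiesPI (F : Profile → Finset ℕ) : Prop :=
  ∀ (P P' : Profile) (j x : ℕ), x ∈ F P → AddVoter P P' j x → x ∈ F P'

/-- The margin of `a` over `b` in the profile `P`. -/
noncomputable def marginP (P : Profile) (a b : ℕ) : ℤ :=
  ((P.voters.filter (fun i => P.ballot i a b)).card : ℤ) -
    ((P.voters.filter (fun i => P.ballot i b a)).card : ℤ)

/-- `l` is a majority cycle in `P`: a sequence of candidates, distinct except that the
first and last entries are equal, with a positive margin along each step. -/
def IsCycle (P : Profile) (l : List ℕ) : Prop :=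
  2 ≤ l.length ∧ l.head? = l.getLast? ∧ l.dropLast.Nodup ∧
  (∀ x ∈ l, x ∈ P.cands) ∧ l.Chain' (fun u v => 0 < marginP P u v)

/-- `a` defeats `b` in `P` according to Split Cycle: the margin of `a` over `b` is
positive and greater than the strength (minimal margin along the cycle) of every
majority cycle containing `a` and `b`. -/
def SCdefeats (P : Profile) (a b : ℕ) : Prop :=
  0 < marginP P a b ∧
  ∀ l : List ℕ, IsCycle P l → a ∈ l → b ∈ l →
    ∃ p ∈ l.zip l.tail, marginP P p.1 p.2 < marginP P a b

/-- The Split Cycle winners: the candidates not defeated by any candidate. -/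
noncomputable def SplitCycle (P : Profile) : Finset ℕ :=
  P.cands.filter (fun x => ¬ ∃ y ∈ P.cands, SCdefeats P y x)

/-- Split Cycle is Condorcet consistent: if `x` is a Condorcet winner in `P`, then
`x` is the unique Split Cycle winner. -/
lemma marginP_neg (P : Profile) (a b : ℕ) : marginP P a b = - marginP P b a := by
  unfold marginP; ring

lemma exists_pred_of_mem_tail :
    ∀ {l : List ℕ} {x : ℕ}, x ∈ l.tail → ∃ u, (u, x) ∈ l.zip l.tail := by
  intro l
  induction l with
  | nil => intro x hx; simp at hx
  | cons a t ih =>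
    intro x hx
    simp only [List.tail_cons] at hx
    match t, hx with
    | b :: t', hx =>
      rcases List.mem_cons.1 hx with h | h
      · exact ⟨a, by simp [h]⟩
      · obtain ⟨u, hu⟩ := ih (x := x) (by simpa using h)
        refine ⟨u, ?_⟩
        simp only [List.tail_cons, List.zip_cons_cons, List.mem_cons] at hu ⊢
        right; exact hu

lemma chain'_of_mem_zip {R : ℕ → ℕ → Prop} :
    ∀ {l : List ℕ} {a b : ℕ}, l.Chain' R → (a, b) ∈ l.zip l.tail → R a b := by
  intro l
  induction l with
  | nil => intro a b _ h; simp at h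
  | cons c t ih =>
    intro a b hc hm
    match t, hc, hm with
    | d :: t', hc, hm =>
      simp only [List.Chain', List.isChain_cons_cons] at hc
      simp only [List.tail_cons, List.zip_cons_cons, List.mem_cons] at hm
      rcases hm with h | h
      · obtain ⟨h1, h2⟩ := Prod.mk.injEq .. ▸ h
        cases h; exact hc.1
      · exact ih hc.2 h

lemma mem_tail_of_cycle {l : List ℕ} (h2 : 2 ≤ l.length)
    (hhl : l.head? = l.getLast?) {x : ℕ} (hx : x ∈ l) : x ∈ l.tail := by
  match l with
  | a :: b :: t =>
    rcases List.mem_cons.1 hx with h | h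
    · subst h
      rw [List.getLast?_cons_cons] at hhl
      simp only [List.head?_cons] at hhl
      have : x ∈ (b :: t) := List.mem_of_mem_getLast? hhl.symm
      simpa using this
    · simpa using h

theorem splitCycle_condorcet_consistent :
    ∀ (P : Profile) (x : ℕ), x ∈ P.cands →
      (∀ y ∈ P.cands, y ≠ x → 0 < marginP P x y) →
      SplitCycle P = {x} := by
  intro P x hx hcond
  ext y
  simp only [SplitCycle, Finset.mem_filter, Finset.mem_singleton]
  constructor
  · rintro ⟨hy, hnd⟩
    by_contra hyx
    exact hnd ⟨x, hx, ⟨hcond y hy hyx, by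
      intro l hl hxl hyl
      exfalso
      obtain ⟨u, hu⟩ := exists_pred_of_mem_tail (mem_tail_of_cycle hl.1 hl.2.1 hxl)
      have hux : 0 < marginP P u x := chain'_of_mem_zip hl.2.2.2.2 hu
      have hune : u ≠ x := by rintro rfl; simp [marginP] at hux
      have humem : u ∈ P.cands := hl.2.2.2.1 u ((List.of_mem_zip hu).1)
      have := hcond u humem hune
      rw [marginP_neg] at hux
      omega⟩⟩
  · rintro rfl
    refine ⟨hx, ?_⟩
    rintro ⟨z, hz, hpos, -⟩
    have hzx : z ≠ y := by rintro rfl; simp [marginP] at hpos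
    have := hcond z hz hzx
    rw [marginP_neg] at hpos
    omega
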